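/- Let n ≥ 1 and let W ⊂ Λ²(ℝ^{2n}) be the span of the vectors {x_i ∧ x_j - y_i ∧ y_j : 1 ≤ i < j ≤ n} ∪ {x_i ∧ y_j - x_j ∧ y_i : 1 ≤ i < j ≤ n}, where x_1,…,x_n,y_1,…,y_n is the standard basis of ℝ^{2n}. Then dim W = n(n-1), and an element A = Σ a_{ij} x_i∧x_j + Σ b_{ij} x_i∧y_j + Σ c_{ij} y_i∧y_j lies in W if and only if a_{ij} + c_{ij} = a_{ji} + c_{ji} and b_{ij} + b_{ji} = 0 for all i,j (with a, c extended antisymmetrically). -/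

import Mathlib

/-- The wedge product v ∧ w of two vectors, inside the exterior algebra of ℝ^{2n}. -/
noncomputable def wdg (n : ℕ) (v w : Fin (n + n) → ℝ) :
    ExteriorAlgebra ℝ (Fin (n + n) → ℝ) :=
  ExteriorAlgebra.ι ℝ v * ExteriorAlgebra.ι ℝ w

noncomputable def phiAlt (n : ℕ) (k l : Fin (n + n)) :
    (Fin (n + n) → ℝ) [⋀^Fin 2]→ₗ[ℝ] ℝ :=
  (Matrix.detRowAlternating (R := ℝ) (n := Fin 2)).compLinearMap
    (LinearMap.pi (fun p : Fin 2 => LinearMap.proj (![k, l] p)))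

noncomputable def phi (n : ℕ) (k l : Fin (n + n)) :
    ExteriorAlgebra ℝ (Fin (n + n) → ℝ) →ₗ[ℝ] ℝ :=
  ExteriorAlgebra.liftAlternating (Function.update 0 2 (phiAlt n k l))

theorem phi_wdg (n : ℕ) (k l : Fin (n + n)) (v w : Fin (n + n) → ℝ) :
    phi n k l (wdg n v w) = v k * w l - v l * w k := by
  rw [wdg, phi, ExteriorAlgebra.liftAlternating_ι_mul, ExteriorAlgebra.liftAlternating_ι]
  have : (Function.update (0 : ∀ i, (Fin (n+n) → ℝ) [⋀^Fin i]→ₗ[ℝ] ℝ) 2 (phiAlt n k l))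
      (Nat.succ 1) = phiAlt n k l := by
    simp [Function.update]
  rw [this]
  simp only [AlternatingMap.curryLeft_apply_apply, phiAlt, AlternatingMap.compLinearMap_apply]
  have hM : ∀ M : Matrix (Fin 2) (Fin 2) ℝ,
      Matrix.detRowAlternating M = M 0 0 * M 1 1 - M 0 1 * M 1 0 := fun M => Matrix.det_fin_two M
  erw [hM]
  simp

noncomputable def Xv (n : ℕ) (i : Fin n) : Fin (n + n) → ℝ := Pi.single (Fin.castAdd n i) 1
noncomputable def Yv (n : ℕ) (i : Fin n) : Fin (n + n) → ℝ := Pi.single (Fin.natAdd n i) 1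

lemma Xv_def (n : ℕ) (i : Fin n) :
    (Pi.single (Fin.castAdd n i) 1 : Fin (n + n) → ℝ) = Xv n i := rfl
lemma Yv_def (n : ℕ) (i : Fin n) :
    (Pi.single (Fin.natAdd n i) 1 : Fin (n + n) → ℝ) = Yv n i := rfl

noncomputable def gA (n : ℕ) (i j : Fin n) : ExteriorAlgebra ℝ (Fin (n + n) → ℝ) :=
  wdg n (Xv n i) (Xv n j) - wdg n (Yv n i) (Yv n j)
noncomputable def gB (n : ℕ) (i j : Fin n) : ExteriorAlgebra ℝ (Fin (n + n) → ℝ) :=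
  wdg n (Xv n i) (Yv n j) - wdg n (Xv n j) (Yv n i)

@[simp] lemma Xv_cast (n : ℕ) (i j : Fin n) :
    Xv n i (Fin.castAdd n j) = if j = i then 1 else 0 := by
  simp [Xv, Pi.single_apply]
@[simp] lemma Xv_nat (n : ℕ) (i j : Fin n) : Xv n i (Fin.natAdd n j) = 0 := by
  simp only [Xv, Pi.single_apply, Fin.ext_iff, Fin.coe_natAdd, Fin.coe_castAdd]
  have := i.isLt
  have := j.isLt
  rw [if_neg]; omega
@[simp] lemma Yv_cast (n : ℕ) (i j : Fin n) : Yv n i (Fin.castAdd n j) = 0 := by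
  simp only [Yv, Pi.single_apply, Fin.ext_iff, Fin.coe_natAdd, Fin.coe_castAdd]
  have := i.isLt
  have := j.isLt
  rw [if_neg]; omega
@[simp] lemma Yv_nat (n : ℕ) (i j : Fin n) :
    Yv n i (Fin.natAdd n j) = if j = i then 1 else 0 := by
  simp [Yv, Pi.single_apply, Fin.ext_iff]

lemma wdg_self (n : ℕ) (v : Fin (n + n) → ℝ) : wdg n v v = 0 :=
  ExteriorAlgebra.ι_sq_zero v

lemma wdg_swap (n : ℕ) (v w : Fin (n + n) → ℝ) : wdg n v w = - wdg n w v := by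
  have h := ExteriorAlgebra.ι_add_mul_swap (R := ℝ) v w
  rw [wdg, wdg, eq_neg_iff_add_eq_zero, h]

lemma phi_sumA (n : ℕ) (a b c : Fin n → Fin n → ℝ) (p q : Fin n) :
    phi n (Fin.castAdd n p) (Fin.castAdd n q)
      (∑ i, ∑ j, (a i j • wdg n (Xv n i) (Xv n j) + b i j • wdg n (Xv n i) (Yv n j)
          + c i j • wdg n (Yv n i) (Yv n j))) = a p q - a q p := by
  simp [map_sum, phi_wdg, mul_ite, ite_mul, mul_sub, Finset.sum_ite_eq, Finset.sum_sub_distrib,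
    Finset.sum_ite_eq']

@[simp] lemma Xv_addNat (n : ℕ) (i j : Fin n) : Xv n i (j.addNat n) = 0 := by
  simp only [Xv, Pi.single_apply, Fin.ext_iff, Fin.coe_addNat, Fin.coe_castAdd]
  have := i.isLt
  rw [if_neg]; omega
@[simp] lemma Yv_addNat (n : ℕ) (i j : Fin n) :
    Yv n i (j.addNat n) = if j = i then 1 else 0 := by
  simp [Yv, Pi.single_apply, Fin.ext_iff]

lemma phi_sumC (n : ℕ) (a b c : Fin n → Fin n → ℝ) (p q : Fin n) :
    phi n (Fin.natAdd n p) (Fin.natAdd n q)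
      (∑ i, ∑ j, (a i j • wdg n (Xv n i) (Xv n j) + b i j • wdg n (Xv n i) (Yv n j)
          + c i j • wdg n (Yv n i) (Yv n j))) = c p q - c q p := by
  simp [map_sum, phi_wdg, mul_ite, ite_mul, mul_sub, Finset.sum_ite_eq, Finset.sum_sub_distrib,
    Finset.sum_ite_eq']

lemma phi_sumB (n : ℕ) (a b c : Fin n → Fin n → ℝ) (p q : Fin n) :
    phi n (Fin.castAdd n p) (Fin.natAdd n q)
      (∑ i, ∑ j, (a i j • wdg n (Xv n i) (Xv n j) + b i j • wdg n (Xv n i) (Yv n j)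
          + c i j • wdg n (Yv n i) (Yv n j))) = b p q := by
  simp [map_sum, phi_wdg, mul_ite, ite_mul, mul_sub, Finset.sum_ite_eq, Finset.sum_sub_distrib,
    Finset.sum_ite_eq']

lemma psi1_gA (n : ℕ) (p q k l : Fin n) :
    phi n (Fin.castAdd n p) (Fin.castAdd n q) (gA n k l)
      + phi n (Fin.natAdd n p) (Fin.natAdd n q) (gA n k l) = 0 := by
  simp [gA, phi_wdg]

lemma psi1_gB (n : ℕ) (p q k l : Fin n) :
    phi n (Fin.castAdd n p) (Fin.castAdd n q) (gB n k l)
      + phi n (Fin.natAdd n p) (Fin.natAdd n q) (gB n k l) = 0 := by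
  simp [gB, phi_wdg]

lemma psi2_gA (n : ℕ) (p q k l : Fin n) :
    phi n (Fin.castAdd n p) (Fin.natAdd n q) (gA n k l)
      + phi n (Fin.castAdd n q) (Fin.natAdd n p) (gA n k l) = 0 := by
  simp [gA, phi_wdg]

lemma psi2_gB (n : ℕ) (p q k l : Fin n) :
    phi n (Fin.castAdd n p) (Fin.natAdd n q) (gB n k l)
      + phi n (Fin.castAdd n q) (Fin.natAdd n p) (gB n k l) = 0 := by
  simp [gB, phi_wdg]
  split_ifs <;> ring

lemma phi_cc_gA_delta (n : ℕ) {p q k l : Fin n} (hpq : p < q) (hkl : k < l) :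
    phi n (Fin.castAdd n p) (Fin.castAdd n q) (gA n k l)
      = if p = k ∧ q = l then 1 else 0 := by
  rw [Fin.lt_def] at hpq hkl
  simp only [gA, map_sub, phi_wdg, Xv_cast, Xv_nat, Yv_cast, Yv_nat, Xv_addNat, Yv_addNat,
    Fin.ext_iff]
  split_ifs <;> first
    | (exfalso; omega)
    | norm_num

lemma phi_cc_gB_zero (n : ℕ) (p q k l : Fin n) :
    phi n (Fin.castAdd n p) (Fin.castAdd n q) (gB n k l) = 0 := by
  simp [gB, phi_wdg]

lemma phi_cn_gA_zero (n : ℕ) (p q k l : Fin n) :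
    phi n (Fin.castAdd n p) (Fin.natAdd n q) (gA n k l) = 0 := by
  simp [gA, phi_wdg]

lemma phi_cn_gB_delta (n : ℕ) {p q k l : Fin n} (hpq : p < q) (hkl : k < l) :
    phi n (Fin.castAdd n p) (Fin.natAdd n q) (gB n k l)
      = if p = k ∧ q = l then 1 else 0 := by
  rw [Fin.lt_def] at hpq hkl
  simp only [gB, map_sub, phi_wdg, Xv_cast, Xv_nat, Yv_cast, Yv_nat, Xv_addNat, Yv_addNat,
    Fin.ext_iff]
  split_ifs <;> first
    | (exfalso; omega)
    | norm_num

lemma gA_self (n : ℕ) (i : Fin n) : gA n i i = 0 := by simp [gA, wdg_self]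
lemma gB_self (n : ℕ) (i : Fin n) : gB n i i = 0 := sub_self _
lemma gA_swap (n : ℕ) (i j : Fin n) : gA n i j = - gA n j i := by
  rw [gA, gA, wdg_swap n (Xv n i) (Xv n j), wdg_swap n (Yv n i) (Yv n j)]
  abel
lemma gB_swap (n : ℕ) (i j : Fin n) : gB n i j = - gB n j i := by
  rw [gB, gB]; abel

def eqvSum (n : ℕ) :
    ({p : Fin n × Fin n // p.1 < p.2} ⊕ {p : Fin n × Fin n // p.1 < p.2})
      ≃ {p : Fin n × Fin n // p.1 ≠ p.2} where
  toFun q := Sum.elim (fun p => ⟨p.1, ne_of_lt p.2⟩)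
    (fun p => ⟨(p.1.2, p.1.1), (ne_of_lt p.2).symm⟩) q
  invFun q := if h : q.1.1 < q.1.2 then .inl ⟨q.1, h⟩
    else .inr ⟨(q.1.2, q.1.1), lt_of_le_of_ne (not_lt.1 h) (Ne.symm q.2)⟩
  left_inv := by
    rintro (⟨⟨i, j⟩, h⟩ | ⟨⟨i, j⟩, h⟩)
    · simp [h]
    · simp [asymm h]
  right_inv := by
    rintro ⟨⟨i, j⟩, h⟩
    by_cases hij : i < j <;> simp [hij]

def eqvDiag (n : ℕ) : {p : Fin n × Fin n // p.1 = p.2} ≃ Fin n where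
  toFun q := q.1.1
  invFun i := ⟨(i, i), rfl⟩
  left_inv := by rintro ⟨⟨i, j⟩, h⟩; simp only at h; subst h; rfl
  right_inv i := rfl

lemma card_lt_sum (n : ℕ) :
    Fintype.card ({p : Fin n × Fin n // p.1 < p.2} ⊕ {p : Fin n × Fin n // p.1 < p.2})
      = n * n - n := by
  rw [Fintype.card_congr (eqvSum n)]
  have h1 : Fintype.card {p : Fin n × Fin n // p.1 = p.2} = n := by
    rw [Fintype.card_congr (eqvDiag n), Fintype.card_fin]
  have h2 := Fintype.card_subtype_compl (fun p : Fin n × Fin n => p.1 = p.2)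
  simp only [Fintype.card_prod, Fintype.card_fin, h1] at h2
  convert h2 using 2

/-- the span W of {xᵢ∧xⱼ - yᵢ∧yⱼ, xᵢ∧yⱼ - xⱼ∧yᵢ : i < j} in Λ²(ℝ^{2n}) has
dimension n(n-1), and an element Σ aᵢⱼ xᵢ∧xⱼ + bᵢⱼ xᵢ∧yⱼ + cᵢⱼ yᵢ∧yⱼ (with a, c extended
antisymmetrically) lies in W iff aᵢⱼ + cᵢⱼ = aⱼᵢ + cⱼᵢ and bᵢⱼ + bⱼᵢ = 0 for all i, j. -/
theorem stmt5 (n : ℕ) (hn : 1 ≤ n)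
    (x y : Fin n → Fin (n + n) → ℝ)
    (hx : ∀ i, x i = Pi.single (Fin.castAdd n i) 1)
    (hy : ∀ i, y i = Pi.single (Fin.natAdd n i) 1)
    (W : Submodule ℝ (ExteriorAlgebra ℝ (Fin (n + n) → ℝ)))
    (hW : W = Submodule.span ℝ
      ({v | ∃ i j : Fin n, i < j ∧ v = wdg n (x i) (x j) - wdg n (y i) (y j)} ∪
       {v | ∃ i j : Fin n, i < j ∧ v = wdg n (x i) (y j) - wdg n (x j) (y i)})) :
    Module.finrank ℝ W = n * (n - 1) ∧
    ∀ a b c : Fin n → Fin n → ℝ,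
      (∀ i j, a i j = - a j i) → (∀ i j, c i j = - c j i) →
      ((∑ i, ∑ j, (a i j • wdg n (x i) (x j) + b i j • wdg n (x i) (y j)
          + c i j • wdg n (y i) (y j))) ∈ W ↔
        ∀ i j, a i j + c i j = a j i + c j i ∧ b i j + b j i = 0) := by
  subst hW
  have hsets : ({v | ∃ i j : Fin n, i < j ∧ v = wdg n (x i) (x j) - wdg n (y i) (y j)} ∪
       {v | ∃ i j : Fin n, i < j ∧ v = wdg n (x i) (y j) - wdg n (x j) (y i)})
      = ({v | ∃ i j : Fin n, i < j ∧ v = wdg n (Xv n i) (Xv n j) - wdg n (Yv n i) (Yv n j)} ∪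
       {v | ∃ i j : Fin n, i < j ∧ v = wdg n (Xv n i) (Yv n j) - wdg n (Xv n j) (Yv n i)}) := by
    simp only [hx, hy, Xv_def, Yv_def]
  rw [hsets]
  set S : Set (ExteriorAlgebra ℝ (Fin (n + n) → ℝ)) :=
    ({v | ∃ i j : Fin n, i < j ∧ v = wdg n (Xv n i) (Xv n j) - wdg n (Yv n i) (Yv n j)} ∪
     {v | ∃ i j : Fin n, i < j ∧ v = wdg n (Xv n i) (Yv n j) - wdg n (Xv n j) (Yv n i)})
    with hS
  set G : ({p : Fin n × Fin n // p.1 < p.2} ⊕ {p : Fin n × Fin n // p.1 < p.2})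
      → ExteriorAlgebra ℝ (Fin (n + n) → ℝ) :=
    Sum.elim (fun p => gA n p.1.1 p.1.2) (fun p => gB n p.1.1 p.1.2) with hG
  have hrange : Set.range G = S := by
    ext v
    constructor
    · rintro ⟨(⟨⟨i, j⟩, h⟩ | ⟨⟨i, j⟩, h⟩), rfl⟩
      · exact Or.inl ⟨i, j, h, rfl⟩
      · exact Or.inr ⟨i, j, h, rfl⟩
    · rintro (⟨i, j, h, rfl⟩ | ⟨i, j, h, rfl⟩)
      · exact ⟨Sum.inl ⟨(i, j), h⟩, rfl⟩
      · exact ⟨Sum.inr ⟨(i, j), h⟩, rfl⟩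
  have hgAmem : ∀ i j : Fin n, gA n i j ∈ Submodule.span ℝ S := by
    intro i j
    rcases lt_trichotomy i j with h | h | h
    · exact Submodule.subset_span (Or.inl ⟨i, j, h, rfl⟩)
    · rw [h, gA_self]; exact zero_mem _
    · rw [gA_swap]; exact neg_mem (Submodule.subset_span (Or.inl ⟨j, i, h, rfl⟩))
  have hgBmem : ∀ i j : Fin n, gB n i j ∈ Submodule.span ℝ S := by
    intro i j
    rcases lt_trichotomy i j with h | h | h
    · exact Submodule.subset_span (Or.inr ⟨i, j, h, rfl⟩)
    · rw [h, gB_self]; exact zero_mem _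
    · rw [gB_swap]; exact neg_mem (Submodule.subset_span (Or.inr ⟨j, i, h, rfl⟩))
  constructor
  · -- dimension
    have hli : LinearIndependent ℝ G := by
      rw [Fintype.linearIndependent_iff]
      intro g hg q₀
      set Φ : ({p : Fin n × Fin n // p.1 < p.2} ⊕ {p : Fin n × Fin n // p.1 < p.2})
          → (ExteriorAlgebra ℝ (Fin (n + n) → ℝ) →ₗ[ℝ] ℝ) :=
        Sum.elim (fun p => phi n (Fin.castAdd n p.1.1) (Fin.castAdd n p.1.2))
          (fun p => phi n (Fin.castAdd n p.1.1) (Fin.natAdd n p.1.2)) with hΦ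
      have hdelta : ∀ q', Φ q₀ (G q') = if q₀ = q' then 1 else 0 := by
        rintro (⟨⟨k, l⟩, hkl⟩ | ⟨⟨k, l⟩, hkl⟩) <;>
          rcases q₀ with ⟨⟨i, j⟩, hij⟩ | ⟨⟨i, j⟩, hij⟩
        · rw [hΦ, hG]
          simp only [Sum.elim_inl]
          rw [phi_cc_gA_delta n hij hkl]
          simp [Subtype.ext_iff, Prod.ext_iff]
        · rw [hΦ, hG]
          simp only [Sum.elim_inl, Sum.elim_inr]
          rw [phi_cn_gA_zero]
          simp
        · rw [hΦ, hG]
          simp only [Sum.elim_inl, Sum.elim_inr]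
          rw [phi_cc_gB_zero]
          simp
        · rw [hΦ, hG]
          simp only [Sum.elim_inr]
          rw [phi_cn_gB_delta n hij hkl]
          simp [Subtype.ext_iff, Prod.ext_iff]
      have h0 := congrArg (Φ q₀) hg
      rw [map_sum, map_zero] at h0
      simp only [map_smul, hdelta, smul_eq_mul, mul_ite, mul_one, mul_zero,
        Finset.sum_ite_eq, Finset.mem_univ, if_true] at h0
      exact h0
    have hcard := finrank_span_eq_card (R := ℝ) hli
    rw [hrange] at hcard
    rw [hcard, card_lt_sum]
    cases n with
    | zero => omega
    | succ m => rw [Nat.succ_sub_one, Nat.mul_succ, Nat.add_sub_cancel]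
  · -- membership criterion
    intro a b c ha hc
    simp only [hx, hy, Xv_def, Yv_def]
    constructor
    · intro hA i j
      have hkerA : ∀ v ∈ S,
          (phi n (Fin.castAdd n i) (Fin.castAdd n j)
            + phi n (Fin.natAdd n i) (Fin.natAdd n j)) v = 0 := by
        rintro v (⟨k, l, hkl, rfl⟩ | ⟨k, l, hkl, rfl⟩)
        · exact psi1_gA n i j k l
        · exact psi1_gB n i j k l
      have hkerB : ∀ v ∈ S,
          (phi n (Fin.castAdd n i) (Fin.natAdd n j)
            + phi n (Fin.castAdd n j) (Fin.natAdd n i)) v = 0 := by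
        rintro v (⟨k, l, hkl, rfl⟩ | ⟨k, l, hkl, rfl⟩)
        · exact psi2_gA n i j k l
        · exact psi2_gB n i j k l
      have hle1 : Submodule.span ℝ S ≤ LinearMap.ker
          (phi n (Fin.castAdd n i) (Fin.castAdd n j)
            + phi n (Fin.natAdd n i) (Fin.natAdd n j)) :=
        Submodule.span_le.2 fun v hv => LinearMap.mem_ker.2 (hkerA v hv)
      have hle2 : Submodule.span ℝ S ≤ LinearMap.ker
          (phi n (Fin.castAdd n i) (Fin.natAdd n j)
            + phi n (Fin.castAdd n j) (Fin.natAdd n i)) :=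
        Submodule.span_le.2 fun v hv => LinearMap.mem_ker.2 (hkerB v hv)
      have h1 := LinearMap.mem_ker.1 (hle1 hA)
      have h2 := LinearMap.mem_ker.1 (hle2 hA)
      rw [LinearMap.add_apply, phi_sumA n a b c i j, phi_sumC n a b c i j] at h1
      rw [LinearMap.add_apply, phi_sumB n a b c i j, phi_sumB n a b c j i] at h2
      constructor
      · linarith
      · linarith
    · intro h
      have hc' : ∀ i j, c i j = - a i j := by
        intro i j
        have h1 := (h i j).1
        have h2 := ha i j
        have h3 := hc i j
        linarith
      have hb' : ∀ i j, b j i = - b i j := by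
        intro i j
        have h1 := (h i j).2
        linarith
      have hswap : (∑ i : Fin n, ∑ j : Fin n, (b i j / 2) • wdg n (Xv n j) (Yv n i))
          = ∑ i : Fin n, ∑ j : Fin n, ((- b i j) / 2) • wdg n (Xv n i) (Yv n j) := by
        rw [Finset.sum_comm]
        exact Finset.sum_congr rfl fun i _ => Finset.sum_congr rfl fun j _ => by
          rw [hb' i j]
      have hB : (∑ i, ∑ j, (b i j / 2) • gB n i j)
          = ∑ i, ∑ j, b i j • wdg n (Xv n i) (Yv n j) := by
        calc ∑ i, ∑ j, (b i j / 2) • gB n i j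
            = ∑ i, ∑ j, ((b i j / 2) • wdg n (Xv n i) (Yv n j)
                - (b i j / 2) • wdg n (Xv n j) (Yv n i)) :=
              Finset.sum_congr rfl fun i _ => Finset.sum_congr rfl fun j _ => by
                rw [gB, smul_sub]
          _ = (∑ i, ∑ j, (b i j / 2) • wdg n (Xv n i) (Yv n j))
                - ∑ i : Fin n, ∑ j : Fin n, (b i j / 2) • wdg n (Xv n j) (Yv n i) := by
              simp [Finset.sum_sub_distrib]
          _ = (∑ i, ∑ j, (b i j / 2) • wdg n (Xv n i) (Yv n j))
                - ∑ i : Fin n, ∑ j : Fin n, ((- b i j) / 2) • wdg n (Xv n i) (Yv n j) := by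
              rw [hswap]
          _ = ∑ i, ∑ j, ((b i j / 2) • wdg n (Xv n i) (Yv n j)
                + (b i j / 2) • wdg n (Xv n i) (Yv n j)) := by
              simp [Finset.sum_add_distrib, Finset.sum_sub_distrib, neg_div, neg_smul,
                sub_neg_eq_add]
          _ = ∑ i, ∑ j, b i j • wdg n (Xv n i) (Yv n j) :=
              Finset.sum_congr rfl fun i _ => Finset.sum_congr rfl fun j _ => by
                rw [← add_smul, add_halves]
      have hA2 : (∑ i : Fin n, ∑ j : Fin n, a i j • gA n i j)
          = (∑ i : Fin n, ∑ j : Fin n, a i j • wdg n (Xv n i) (Xv n j))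
            - ∑ i : Fin n, ∑ j : Fin n, a i j • wdg n (Yv n i) (Yv n j) := by
        simp [gA, smul_sub, Finset.sum_sub_distrib]
      have hC : (∑ i : Fin n, ∑ j : Fin n, c i j • wdg n (Yv n i) (Yv n j))
          = - ∑ i : Fin n, ∑ j : Fin n, a i j • wdg n (Yv n i) (Yv n j) := by
        rw [← Finset.sum_neg_distrib]
        exact Finset.sum_congr rfl fun i _ => by
          rw [← Finset.sum_neg_distrib]
          exact Finset.sum_congr rfl fun j _ => by rw [hc' i j, neg_smul]
      have hid : (∑ i, ∑ j, (a i j • wdg n (Xv n i) (Xv n j)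
            + b i j • wdg n (Xv n i) (Yv n j) + c i j • wdg n (Yv n i) (Yv n j)))
          = ∑ i, ∑ j, (a i j • gA n i j + (b i j / 2) • gB n i j) := by
        simp only [Finset.sum_add_distrib]
        rw [hB, hA2, hC]
        abel
      rw [hid]
      exact Submodule.sum_mem _ fun i _ => Submodule.sum_mem _ fun j _ =>
        add_mem (Submodule.smul_mem _ _ (hgAmem i j)) (Submodule.smul_mem _ _ (hgBmem i j))
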